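/- The extended Rubio de Francia basis ℛ* does not differentiate L^∞(T^ω): there exists a measurable set C ⊂ T^ω with 0 < m(C) ≤ 3/4 such that for almost every x ∈ T^ω there is a sequence of intervals I_x^{(p)} ∈ ℛ* containing x with diameters tending to 0 and with m(C ∩ I_x^{(p)})/m(I_x^{(p)}) ≥ 1/2 for all p; consequently the upper derivative of ∫χ_C with respect to ℛ* is ≥ 1/2 almost everywhere, whereas χ_C = 0 on a set of measure ≥ 1/4. -/

import Mathlib

open MeasureTheory Filter Topology Pointwise

/-- The infinite torus `T^ω`, the countable product of circles `T = ℝ/ℤ`. -/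
abbrev Tomega : Type := ℕ → AddCircle (1 : ℝ)

/-- The open arc of the circle `T = ℝ/ℤ` which is the image of the interval `(a, b) ⊂ ℝ`. -/
def arc (a b : ℝ) : Set (AddCircle (1 : ℝ)) :=
  (fun t : ℝ => (t : AddCircle (1 : ℝ))) '' Set.Ioo a b

/-- The subgroup `R_k = {0, 1/k, …, (k-1)/k}` of `k`-th roots of unity in `T = ℝ/ℤ`. -/
noncomputable def Rsub (k : ℕ) : AddSubgroup (AddCircle (1 : ℝ)) :=
  AddSubgroup.zmultiples (((k : ℝ)⁻¹ : ℝ) : AddCircle (1 : ℝ))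

/-- The exponent pattern of the Rubio de Francia construction: for `m = n² + j` with
`1 ≤ j ≤ 2n+1` (so `n = Nat.sqrt (m-1)`), the `i`-th coordinate (0-indexed) of `H_m` is
`R_{2^(rdfExp m i)}` and the `i`-th edge of `V_m` is `(0, 2^{-(rdfExp m i)})`; coordinates
with exponent `0` carry the trivial subgroup `{0}`, resp. the full circle `T`. -/
def rdfExp (m i : ℕ) : ℕ :=
  let n := Nat.sqrt (m - 1)
  let j := m - n ^ 2
  if j ≤ n then (if i < n then n else if i = n then j else 0)
  else (if i < j - n then n + 1 else if i ≤ n then n else 0)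

/-- The finite subgroup `H_m` of `T^ω` of the Rubio de Francia construction. -/
noncomputable def Hgrp (m : ℕ) : AddSubgroup Tomega :=
  AddSubgroup.pi Set.univ fun i => Rsub (2 ^ rdfExp m i)

/-- The fundamental domain `V_m` for `T^ω / H_m` of the Rubio de Francia construction. -/
def Vset (m : ℕ) : Set Tomega :=
  {x | ∀ i, rdfExp m i ≠ 0 → x i ∈ arc 0 ((2 : ℝ) ^ rdfExp m i)⁻¹}

/-- The metric `d(x,y) = ∑_{n≥1} |x_n − y_n| / 2^n` on `T^ω` (0-indexed coordinates),
where `‖·‖` is the quotient (circle) distance on `T = ℝ/ℤ`. -/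
noncomputable def Dmet (x y : Tomega) : ℝ := ∑' n : ℕ, ‖x n - y n‖ / 2 ^ (n + 1)

/-- The `(m,q)`-cube `□_{m,q} = (0, 2^{-m})^q × T^{q,ω}` in `T^ω`. -/
def cubeSet (m q : ℕ) : Set Tomega := {x | ∀ i < q, x i ∈ arc 0 ((2 : ℝ) ^ m)⁻¹}

/-- The element of `T^ω` whose `j`-th coordinate is `2^{-m}` and all other coordinates `0`;
adding it realizes the translation `τ_j^m`. -/
noncomputable def tauPt (m j : ℕ) : Tomega :=
  fun i => if i = j then ((((2 : ℝ) ^ m)⁻¹ : ℝ) : AddCircle (1 : ℝ)) else 0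

/-- The sack `S(Q) = Q ∪ ⋃_{j<q} τ_j^m(Q)` of a set `Q` (0-indexed coordinates `j < q`). -/
def sack (m q : ℕ) (Q : Set Tomega) : Set Tomega := Q ∪ ⋃ j < q, tauPt m j +ᵥ Q

/-- The double `(m,m)`-cube `W_{m,r} = □_{m,m} ∪ τ_r^m(□_{m,m})` (0-indexed `r < m`). -/
def Wcube (m r : ℕ) : Set Tomega := cubeSet m m ∪ (tauPt m r +ᵥ cubeSet m m)

/-- The extended Rubio de Francia basis `ℛ*`: all translates of the fundamental domains
`V_n` together with all translates of the double cubes `W_{m,r}`. -/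
def RStar : Set (Set Tomega) :=
  {S | ∃ y : Tomega, ∃ n : ℕ, 1 ≤ n ∧ S = y +ᵥ Vset n} ∪
  {S | ∃ y : Tomega, ∃ m r : ℕ, 2 ≤ m ∧ r < m ∧ S = y +ᵥ Wcube m r}

namespace RdF

local notation "𝕋" => AddCircle (1 : ℝ)

/-! ### Arc lemmas -/

lemma coe_int_zero (n : ℤ) : ((n : ℝ) : 𝕋) = 0 := by
  rw [AddCircle.coe_eq_zero_iff]; exact ⟨n, by simp⟩

lemma coe_sub_coe (s t : ℝ) : ((s : ℝ) : 𝕋) - ((t : ℝ) : 𝕋) = ((s - t : ℝ) : 𝕋) := by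
  rw [sub_eq_iff_eq_add, ← AddCircle.coe_add, sub_add_cancel]

lemma vadd_arc (c a b : ℝ) : ((c : ℝ) : 𝕋) +ᵥ arc a b = arc (a + c) (b + c) := by
  ext z
  simp only [arc, Set.mem_vadd_set, Set.mem_image, Set.mem_Ioo]
  constructor
  · rintro ⟨w, ⟨t, ht, rfl⟩, rfl⟩
    refine ⟨t + c, ⟨by linarith [ht.1], by linarith [ht.2]⟩, ?_⟩
    rw [vadd_eq_add, ← AddCircle.coe_add]
    congr 1; ring
  · rintro ⟨t, ht, rfl⟩
    refine ⟨((t - c : ℝ) : 𝕋), ⟨t - c, ⟨by linarith [ht.1], by linarith [ht.2]⟩, rfl⟩, ?_⟩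
    rw [vadd_eq_add, ← AddCircle.coe_add]
    congr 1; ring

lemma arc_add_int (a b : ℝ) (n : ℤ) : arc (a + n) (b + n) = arc a b := by
  have h := vadd_arc (n : ℝ) a b
  rw [coe_int_zero, zero_vadd] at h
  exact h.symm

lemma mem_vadd_arc_iff {c a b : ℝ} {z : 𝕋} :
    -((c : ℝ) : 𝕋) + z ∈ arc a b ↔ z ∈ arc (a + c) (b + c) := by
  rw [← vadd_arc c a b, Set.mem_vadd_set_iff_neg_vadd_mem, vadd_eq_add]

lemma arc_mono {a b a' b' : ℝ} (h : Set.Ioo a b ⊆ Set.Ioo a' b') : arc a b ⊆ arc a' b' :=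
  Set.image_mono h

lemma arc_disjoint {a b a' b' : ℝ} (h1 : Set.Ioo a b ⊆ Set.Ico 0 1)
    (h2 : Set.Ioo a' b' ⊆ Set.Ico 0 1)
    (h : Disjoint (Set.Ioo a b) (Set.Ioo a' b')) : Disjoint (arc a b) (arc a' b') := by
  rw [Set.disjoint_left]
  rintro z ⟨t, ht, rfl⟩ ⟨s, hs, hz⟩
  have hmem1 : t ∈ Set.Ico (0:ℝ) (0 + 1) := by simpa using h1 ht
  have hmem2 : s ∈ Set.Ico (0:ℝ) (0 + 1) := by simpa using h2 hs
  have : s = t := (AddCircle.coe_eq_coe_iff_of_mem_Ico hmem2 hmem1).mp hz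
  exact Set.disjoint_left.mp h ht (this ▸ hs)

lemma isOpen_arc (a b : ℝ) : IsOpen (arc a b) :=
  QuotientAddGroup.isOpenMap_coe _ isOpen_Ioo

lemma norm_coe_le (t : ℝ) : ‖((t : ℝ) : 𝕋)‖ ≤ |t| := by
  simpa [Real.norm_eq_abs] using QuotientAddGroup.norm_mk_le_norm (S := AddSubgroup.zmultiples (1:ℝ)) (m := t)

lemma norm_le_half (z : 𝕋) : ‖z‖ ≤ 1 / 2 := by
  simpa using AddCircle.norm_le_half_period (1:ℝ) (x := z) one_ne_zero

lemma norm_sub_le_arc {a b : ℝ} {u v : 𝕋} (hu : u ∈ arc a b) (hv : v ∈ arc a b) :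
    ‖u - v‖ ≤ b - a := by
  obtain ⟨s, hs, rfl⟩ := hu
  obtain ⟨t, ht, rfl⟩ := hv
  rw [coe_sub_coe]
  refine (norm_coe_le _).trans ?_
  rw [abs_le]
  exact ⟨by linarith [hs.1, hs.2, ht.1, ht.2], by linarith [hs.1, hs.2, ht.1, ht.2]⟩

/-! ### Representatives -/

noncomputable def rep (z : 𝕋) : ℝ := ((AddCircle.equivIco 1 0 z : ℝ))

lemma rep_mem (z : 𝕋) : rep z ∈ Set.Ico (0:ℝ) 1 := by
  have := (AddCircle.equivIco 1 0 z).2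
  simpa [rep] using this

lemma coe_rep (z : 𝕋) : ((rep z : ℝ) : 𝕋) = z := (AddCircle.equivIco 1 0).symm_apply_apply z

/-! ### The null set of rational coordinates -/

def Gset : Set Tomega := ⋃ (i : ℕ) (q : ℚ), {x : Tomega | x i = ((q : ℝ) : 𝕋)}

lemma rep_ne_rat {x : Tomega} (hx : x ∉ Gset) (i : ℕ) (q : ℚ) : rep (x i) ≠ (q : ℝ) := by
  intro h
  exact hx (Set.mem_iUnion.mpr ⟨i, Set.mem_iUnion.mpr ⟨q, by
    simp only [Set.mem_setOf_eq]; rw [← coe_rep (x i), h]⟩⟩)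

lemma slice_null (μ : Measure Tomega) [μ.IsAddHaarMeasure] [IsProbabilityMeasure μ]
    (i : ℕ) (c : 𝕋) : μ {x : Tomega | x i = c} = 0 := by
  by_contra h
  have key : ∀ t : ℝ, μ {x : Tomega | x i = ((t : ℝ) : 𝕋) + c} = μ {x : Tomega | x i = c} := by
    intro t
    have hset : {x : Tomega | x i = ((t:ℝ):𝕋) + c}
        = (fun z : Tomega => (fun j => if j = i then -((t:ℝ):𝕋) else 0) + z) ⁻¹' {x | x i = c} := by
      ext z
      simp only [Set.mem_setOf_eq, Set.mem_preimage, Pi.add_apply, if_true, eq_self_iff_true]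
      constructor
      · intro hz; rw [hz, neg_add_cancel_left]
      · intro hz; rw [← hz, add_neg_cancel_left]
    rw [hset, measure_preimage_add]
  have hdist : ∀ n k : ℕ, n ≠ k →
      ((1/((n:ℝ)+2) : ℝ) : 𝕋) + c ≠ ((1/((k:ℝ)+2) : ℝ) : 𝕋) + c := by
    intro n k hnk heq
    have h2 : ((1/((n:ℝ)+2) : ℝ) : 𝕋) = ((1/((k:ℝ)+2) : ℝ) : 𝕋) := add_right_cancel heq
    have hn2 : (0:ℝ) < (n:ℝ) + 2 := by positivity
    have hk2 : (0:ℝ) < (k:ℝ) + 2 := by positivity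
    have hmemn : 1/((n:ℝ)+2) ∈ Set.Ico (0:ℝ) (0 + 1) := by
      constructor
      · positivity
      · rw [zero_add, div_lt_one hn2]; nlinarith [Nat.cast_nonneg (α := ℝ) n]
    have hmemk : 1/((k:ℝ)+2) ∈ Set.Ico (0:ℝ) (0 + 1) := by
      constructor
      · positivity
      · rw [zero_add, div_lt_one hk2]; nlinarith [Nat.cast_nonneg (α := ℝ) k]
    rw [AddCircle.coe_eq_coe_iff_of_mem_Ico hmemn hmemk] at h2
    rw [div_eq_div_iff hn2.ne' hk2.ne'] at h2
    have : (n:ℝ) = (k:ℝ) := by linarith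
    exact hnk (by exact_mod_cast this)
  have hdisj : Pairwise (Function.onFun Disjoint
      fun n : ℕ => {x : Tomega | x i = ((1/((n:ℝ)+2) : ℝ) : 𝕋) + c}) := by
    intro n k hnk
    rw [Function.onFun, Set.disjoint_left]
    intro x h1 h2
    exact hdist n k hnk (h1 ▸ h2)
  have hmeas : ∀ n : ℕ,
      MeasurableSet {x : Tomega | x i = ((1/((n:ℝ)+2) : ℝ) : 𝕋) + c} := by
    intro n
    exact measurable_pi_apply i (measurableSet_singleton _)
  have hU := measure_iUnion (μ := μ) hdisj hmeas
  have hle : μ (⋃ n : ℕ, {x : Tomega | x i = ((1/((n:ℝ)+2) : ℝ) : 𝕋) + c}) ≤ 1 := prob_le_one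
  rw [hU] at hle
  simp_rw [key] at hle
  rw [ENNReal.tsum_const_eq_top_of_ne_zero h] at hle
  simp at hle

lemma Gset_null (μ : Measure Tomega) [μ.IsAddHaarMeasure] [IsProbabilityMeasure μ] :
    μ Gset = 0 := by
  refine measure_iUnion_null fun i => measure_iUnion_null fun q => slice_null μ i _

/-! ### Cells -/

noncomputable def ell (m : ℕ) : ℝ := ((2:ℝ)^m)⁻¹

lemma ell_pos (m : ℕ) : 0 < ell m := by unfold ell; positivity

lemma two_pow_mul_ell (m : ℕ) : (2:ℝ)^m * ell m = 1 := by
  unfold ell; rw [mul_inv_cancel₀]; positivity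

def cellArc (m k : ℕ) : Set 𝕋 := arc ((k : ℝ) * ell m) ((k : ℝ) * ell m + ell m)

def Cell (m : ℕ) (k : ℕ → ℕ) : Set Tomega := {x | ∀ i < m, x i ∈ cellArc m (k i)}

noncomputable def base (m : ℕ) (k : ℕ → ℕ) : Tomega :=
  fun i => if i < m then (((k i : ℝ) * ell m : ℝ) : 𝕋) else 0

lemma Cell_congr {m : ℕ} {k k' : ℕ → ℕ} (h : ∀ i < m, k i = k' i) : Cell m k = Cell m k' := by
  ext x
  simp only [Cell, Set.mem_setOf_eq]
  constructor
  · intro hx i hi; rw [← h i hi]; exact hx i hi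
  · intro hx i hi; rw [h i hi]; exact hx i hi

lemma cellArc_mod (m k : ℕ) : cellArc m k = cellArc m (k % 2^m) := by
  have h := congrArg (fun n : ℕ => (n : ℝ)) (Nat.mod_add_div k (2 ^ m))
  push_cast at h
  have h2 := two_pow_mul_ell m
  have hk : (k : ℝ) * ell m = ((k % 2^m : ℕ) : ℝ) * ell m + ((k / 2^m : ℕ) : ℤ) := by
    rw [Int.cast_natCast]
    linear_combination (-(ell m)) * h + ((k / 2^m : ℕ) : ℝ) * h2
  have hk' : (k : ℝ) * ell m + ell m
      = (((k % 2^m : ℕ) : ℝ) * ell m + ell m) + ((k / 2^m : ℕ) : ℤ) := by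
    rw [hk]; ring
  unfold cellArc
  rw [hk', hk, arc_add_int]

lemma Cell_mod (m : ℕ) (k : ℕ → ℕ) : Cell m k = Cell m (fun i => k i % 2^m) := by
  ext x
  simp only [Cell, Set.mem_setOf_eq]
  constructor
  · intro hx i hi; rw [← cellArc_mod]; exact hx i hi
  · intro hx i hi; rw [cellArc_mod]; exact hx i hi

lemma base_vadd_cube (m : ℕ) (k : ℕ → ℕ) : base m k +ᵥ cubeSet m m = Cell m k := by
  ext x
  rw [Set.mem_vadd_set_iff_neg_vadd_mem]
  have key : ∀ i, i < m → ((-(base m k) +ᵥ x) i ∈ arc 0 ((2:ℝ)^m)⁻¹ ↔ x i ∈ cellArc m (k i)) := by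
    intro i hi
    have hb : (-(base m k) +ᵥ x) i = -(((k i : ℝ) * ell m : ℝ) : 𝕋) + x i := by
      rw [vadd_eq_add]
      simp only [Pi.add_apply, Pi.neg_apply, base, if_pos hi]
    rw [hb]
    have : arc 0 ((2:ℝ)^m)⁻¹ = arc 0 (ell m) := rfl
    rw [this, mem_vadd_arc_iff]
    unfold cellArc
    rw [zero_add, add_comm (ell m)]
  constructor
  · intro hmem i hi
    exact (key i hi).mp (hmem i hi)
  · intro hmem i hi
    exact (key i hi).mpr (hmem i hi)

lemma base_add_base (m : ℕ) (k k' : ℕ → ℕ) :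
    base m k + base m k' = base m (fun i => k i + k' i) := by
  funext i
  simp only [base, Pi.add_apply]
  by_cases hi : i < m
  · rw [if_pos hi, if_pos hi, if_pos hi, ← AddCircle.coe_add]
    congr 1; push_cast; ring
  · rw [if_neg hi, if_neg hi, if_neg hi, add_zero]

lemma vadd_cell (m : ℕ) (k k' : ℕ → ℕ) :
    base m k +ᵥ Cell m k' = Cell m (fun i => k i + k' i) := by
  rw [← base_vadd_cube, vadd_vadd, base_add_base, base_vadd_cube]

lemma tauPt_eq_base {m r : ℕ} (hr : r < m) :
    tauPt m r = base m (fun i => if i = r then 1 else 0) := by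
  funext i
  simp only [tauPt, base]
  by_cases hir : i = r
  · subst hir
    rw [if_pos rfl, if_pos hr, if_pos rfl]
    congr 1
    rw [Nat.cast_one, one_mul]
    rfl
  · rw [if_neg hir]
    by_cases hi : i < m
    · rw [if_pos hi, if_neg hir]
      rw [Nat.cast_zero, zero_mul]
      rfl
    · rw [if_neg hi]

lemma base_add_tau {m r : ℕ} (hr : r < m) (k : ℕ → ℕ) :
    base m k + tauPt m r = base m (Function.update k r (k r + 1)) := by
  funext i
  simp only [Pi.add_apply, base, tauPt, Function.update_apply]
  rcases eq_or_ne i r with h|h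
  · subst h
    rw [if_pos rfl, if_pos hr, if_pos hr, if_pos rfl, ← AddCircle.coe_add]
    congr 1
    have hinv : ((2:ℝ)^m)⁻¹ = ell m := rfl
    rw [hinv]
    push_cast
    ring
  · rw [if_neg h, if_neg h, add_zero]

lemma cube_eq_cell (m : ℕ) : cubeSet m m = Cell m (fun _ => 0) := by
  ext x
  simp only [cubeSet, Cell, Set.mem_setOf_eq, cellArc, Nat.cast_zero, zero_mul, zero_add]
  rfl

lemma vadd_W_eq {m r : ℕ} (hr : r < m) (kb : ℕ → ℕ) :
    base m kb +ᵥ Wcube m r = Cell m kb ∪ Cell m (Function.update kb r (kb r + 1)) := by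
  unfold Wcube
  rw [Set.vadd_set_union, vadd_vadd, base_add_tau hr, base_vadd_cube, base_vadd_cube]

lemma measurableSet_cell (m : ℕ) (k : ℕ → ℕ) : MeasurableSet (Cell m k) := by
  have : Cell m k = ⋂ (i : ℕ) (_ : i < m), (fun x : Tomega => x i) ⁻¹' cellArc m (k i) := by
    ext x; simp [Cell]
  rw [this]
  exact MeasurableSet.iInter fun i => MeasurableSet.iInter fun _ =>
    measurable_pi_apply i (isOpen_arc _ _).measurableSet

lemma cellArc_disjoint {m a b : ℕ} (ha : a < 2^m) (hb : b < 2^m) (hne : a ≠ b) :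
    Disjoint (cellArc m a) (cellArc m b) := by
  have haR : (a:ℝ) + 1 ≤ (2:ℝ)^m := by exact_mod_cast ha
  have hbR : (b:ℝ) + 1 ≤ (2:ℝ)^m := by exact_mod_cast hb
  have hl := ell_pos m
  have h2 := two_pow_mul_ell m
  refine arc_disjoint ?_ ?_ ?_
  · intro t ht
    constructor
    · have : (0:ℝ) ≤ (a:ℝ) * ell m := by positivity
      linarith [ht.1]
    · nlinarith [ht.2]
  · intro t ht
    constructor
    · have : (0:ℝ) ≤ (b:ℝ) * ell m := by positivity
      linarith [ht.1]
    · nlinarith [ht.2]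
  · rw [Set.disjoint_left]
    intro t ht1 ht2
    rcases hne.lt_or_gt with hab | hab
    · have hle : (a:ℝ) + 1 ≤ (b:ℝ) := by exact_mod_cast hab
      nlinarith [ht1.2, ht2.1]
    · have hle : (b:ℝ) + 1 ≤ (a:ℝ) := by exact_mod_cast hab
      nlinarith [ht2.2, ht1.1]

lemma cell_disjoint {m : ℕ} {k k' : ℕ → ℕ} {i : ℕ} (hi : i < m) (hne : k i ≠ k' i)
    (hk : k i < 2^m) (hk' : k' i < 2^m) : Disjoint (Cell m k) (Cell m k') := by
  rw [Set.disjoint_left]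
  intro x hx hx'
  exact Set.disjoint_left.mp (cellArc_disjoint hk hk' hne) (hx i hi) (hx' i hi)

lemma cell_disjoint_succ {m : ℕ} (hm : 1 ≤ m) {r : ℕ} (hr : r < m) (kb : ℕ → ℕ) :
    Disjoint (Cell m kb) (Cell m (Function.update kb r (kb r + 1))) := by
  have hpos : 0 < 2^m := Nat.two_pow_pos m
  rw [Cell_mod m kb, Cell_mod m (Function.update kb r (kb r + 1))]
  refine cell_disjoint hr ?_ (Nat.mod_lt _ hpos) (Nat.mod_lt _ hpos)
  show kb r % 2^m ≠ Function.update kb r (kb r + 1) r % 2^m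
  rw [Function.update_self]
  intro hcontra
  have hmod : (kb r + 1) ≡ kb r + 0 [MOD 2^m] := by
    show (kb r + 1) % 2^m = (kb r + 0) % 2^m
    rw [Nat.add_zero]
    exact hcontra.symm
  have h0 : (1:ℕ) ≡ 0 [MOD 2^m] := Nat.ModEq.add_left_cancel' (kb r) hmod
  have h1 : 2^m ∣ 1 := Nat.modEq_zero_iff_dvd.mp h0
  have h3 := Nat.dvd_one.mp h1
  have h4 : 2 ≤ 2^m := by
    calc 2 = 2^1 := (pow_one 2).symm
    _ ≤ 2^m := Nat.pow_le_pow_right (by norm_num) hm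
  omega

/-! ### Membership of the cell determined by the index -/

noncomputable def idx (m : ℕ) (z : 𝕋) : ℕ := ⌊(2:ℝ)^m * rep z⌋₊

noncomputable def kOf (m : ℕ) (x : Tomega) : ℕ → ℕ := fun i => idx m (x i)

lemma kOf_spec {x : Tomega} (hx : x ∉ Gset) (m i : ℕ) :
    kOf m x i < 2^m ∧ x i ∈ cellArc m (kOf m x i) := by
  show idx m (x i) < 2^m ∧ x i ∈ cellArc m (idx m (x i))
  set t := rep (x i) with ht
  have h0 : 0 ≤ t := (rep_mem (x i)).1
  have h1 : t < 1 := (rep_mem (x i)).2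
  have hp : (0:ℝ) < (2:ℝ)^m := by positivity
  have hnn : 0 ≤ (2:ℝ)^m * t := by positivity
  set k := idx m (x i) with hk
  have hfl : (k:ℝ) ≤ (2:ℝ)^m * t := Nat.floor_le hnn
  have hfl2 : (2:ℝ)^m * t < (k:ℝ) + 1 := Nat.lt_floor_add_one _
  have hklt : k < 2^m := by
    have : (2:ℝ)^m * t < ((2^m : ℕ) : ℝ) := by
      push_cast
      nlinarith
    exact (Nat.floor_lt hnn).mpr this
  have hne : (k:ℝ) ≠ (2:ℝ)^m * t := by
    intro hcontra
    have : t = (((k:ℚ) / (2:ℚ)^m : ℚ) : ℝ) := by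
      push_cast
      rw [eq_div_iff (ne_of_gt hp)]
      linarith [hcontra]
    exact rep_ne_rat hx i _ this
  have hstrict : (k:ℝ) < (2:ℝ)^m * t := lt_of_le_of_ne hfl hne
  have hl := ell_pos m
  have h2 := two_pow_mul_ell m
  constructor
  · exact hklt
  · refine ⟨t, ⟨?_, ?_⟩, coe_rep (x i)⟩
    · nlinarith
    · nlinarith

lemma mem_cell_kOf {x : Tomega} (hx : x ∉ Gset) (m : ℕ) : x ∈ Cell m (kOf m x) :=
  fun i _ => (kOf_spec hx m i).2

/-! ### Measure of cells -/

lemma meas_vadd (μ : Measure Tomega) [μ.IsAddHaarMeasure] (y : Tomega) (s : Set Tomega) :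
    μ (y +ᵥ s) = μ s := by
  have h : y +ᵥ s = (fun x : Tomega => -y + x) ⁻¹' s := by
    ext x
    rw [Set.mem_vadd_set_iff_neg_vadd_mem]
    rfl
  rw [h, measure_preimage_add]

lemma meas_cell (μ : Measure Tomega) [μ.IsAddHaarMeasure] (m : ℕ) (k : ℕ → ℕ) :
    μ (Cell m k) = μ (cubeSet m m) := by
  rw [← base_vadd_cube, meas_vadd]

def emb (m : ℕ) (kf : Fin m → Fin (2^m)) : ℕ → ℕ :=
  fun i => if h : i < m then (kf ⟨i, h⟩ : ℕ) else 0

lemma emb_lt (m : ℕ) (kf : Fin m → Fin (2^m)) (i : ℕ) : emb m kf i < 2^m := by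
  unfold emb
  split
  · exact (kf _).2
  · exact Nat.two_pow_pos m

lemma cube_measure_facts (μ : Measure Tomega) [μ.IsAddHaarMeasure] [IsProbabilityMeasure μ]
    (m : ℕ) :
    μ (cubeSet m m) ≠ 0 ∧ (((2^m)^m : ℕ) : ENNReal) * μ (cubeSet m m) ≤ 1 := by
  set F : (Fin m → Fin (2^m)) → Set Tomega := fun kf => Cell m (emb m kf) with hF
  have hdisj : Pairwise (Function.onFun Disjoint F) := by
    intro a b hab
    obtain ⟨i, hi⟩ := Function.ne_iff.mp hab
    refine cell_disjoint (i := i.1) i.2 ?_ (emb_lt m a i.1) (emb_lt m b i.1)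
    simp only [emb, dif_pos i.2, Fin.eta]
    exact fun hc => hi (Fin.ext hc)
  have hmeas : ∀ kf, MeasurableSet (F kf) := fun kf => measurableSet_cell m _
  have hU := measure_iUnion (μ := μ) hdisj hmeas
  have hconst : ∀ kf, μ (F kf) = μ (cubeSet m m) := fun kf => meas_cell μ m _
  have htsum : ∑' kf, μ (F kf) = (((2^m)^m : ℕ) : ENNReal) * μ (cubeSet m m) := by
    simp_rw [hconst]
    rw [tsum_fintype, Finset.sum_const, nsmul_eq_mul]
    congr 1
    rw [Finset.card_univ, Fintype.card_fun]
    simp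
  have hle : (((2^m)^m : ℕ) : ENNReal) * μ (cubeSet m m) ≤ 1 := by
    rw [← htsum, ← hU]
    exact prob_le_one
  have hcover : Set.univ ⊆ (⋃ kf, F kf) ∪ Gset := by
    intro x _
    by_cases hx : x ∈ Gset
    · exact Or.inr hx
    · left
      refine Set.mem_iUnion.mpr ⟨fun i => ⟨kOf m x i.1, (kOf_spec hx m i.1).1⟩, ?_⟩
      show x ∈ Cell m (emb m (fun i : Fin m => ⟨kOf m x i.1, (kOf_spec hx m i.1).1⟩))
      have heq : Cell m (emb m (fun i : Fin m => ⟨kOf m x i.1, (kOf_spec hx m i.1).1⟩))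
          = Cell m (kOf m x) := by
        refine Cell_congr fun i hi => ?_
        simp [emb, dif_pos hi]
      rw [heq]
      exact mem_cell_kOf hx m
  have hge : (1 : ENNReal) ≤ (((2^m)^m : ℕ) : ENNReal) * μ (cubeSet m m) := by
    have h1 : (1:ENNReal) = μ Set.univ := (measure_univ (μ := μ)).symm
    rw [h1, ← htsum, ← hU]
    calc μ Set.univ ≤ μ ((⋃ kf, F kf) ∪ Gset) := measure_mono hcover
      _ ≤ μ (⋃ kf, F kf) + μ Gset := measure_union_le _ _
      _ = μ (⋃ kf, F kf) := by rw [Gset_null μ, add_zero]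
  constructor
  · intro hzero
    rw [hzero, mul_zero] at hge
    simp at hge
  · exact hle

end RdF

namespace RdF
local notation "𝕋" => AddCircle (1 : ℝ)

/-! ### Marked cells -/

def sigmaW (m : ℕ) (k : ℕ → ℕ) : ℕ := ∑ i ∈ Finset.range m, (i+1) * k i

def Marked (m KK : ℕ) (k : ℕ → ℕ) : Prop := ((sigmaW m k : ZMod KK) = 0)

def Mp (p : ℕ) : ℕ := 2^(p+2) - 1
def Kp (p : ℕ) : ℕ := 2^(p+2)

lemma Mp_ge (p : ℕ) : p + 2 ≤ Mp p := by
  have := Nat.lt_two_pow_self (n := p+2)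
  unfold Mp
  omega

lemma Mp_ge_two (p : ℕ) : 2 ≤ Mp p := by
  have h : 2^2 ≤ 2^(p+2) := Nat.pow_le_pow_right (by norm_num) (by omega)
  unfold Mp; omega

lemma Kp_eq (p : ℕ) : Kp p = Mp p + 1 := by
  have : (0:ℕ) < 2^(p+2) := Nat.two_pow_pos _
  unfold Kp Mp; omega

lemma Kp_dvd (p : ℕ) : Kp p ∣ 2^(Mp p) := pow_dvd_pow 2 (by have := Mp_ge p; omega)

def Cp (p : ℕ) : Set Tomega :=
  ⋃ (kf : {kf : Fin (Mp p) → Fin (2^(Mp p)) // Marked (Mp p) (Kp p) (emb (Mp p) kf)}),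
    Cell (Mp p) (emb (Mp p) kf.1)

def Cset : Set Tomega := ⋃ p, Cp p

lemma measurableSet_Cp (p : ℕ) : MeasurableSet (Cp p) :=
  MeasurableSet.iUnion fun kf => measurableSet_cell _ _

lemma measurableSet_Cset : MeasurableSet Cset :=
  MeasurableSet.iUnion fun p => measurableSet_Cp p

lemma cast_mod_pow {KK m : ℕ} (hdvd : KK ∣ 2^m) (a : ℕ) :
    ((a % 2^m : ℕ) : ZMod KK) = (a : ZMod KK) := by
  conv_rhs => rw [← Nat.div_add_mod a (2^m)]
  rw [Nat.cast_add, Nat.cast_mul, (ZMod.natCast_eq_zero_iff _ _).mpr hdvd,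
    zero_mul, zero_add]

lemma marked_mod {m KK : ℕ} (hdvd : KK ∣ 2^m) {k : ℕ → ℕ} (h : Marked m KK k) :
    Marked m KK (fun i => k i % 2^m) := by
  unfold Marked sigmaW at *
  rw [Nat.cast_sum] at h ⊢
  have hcg : ∀ i ∈ Finset.range m,
      (((i+1) * (k i % 2^m) : ℕ) : ZMod KK) = (((i+1) * k i : ℕ) : ZMod KK) := by
    intro i _
    rw [Nat.cast_mul, Nat.cast_mul, cast_mod_pow hdvd]
  rw [Finset.sum_congr rfl hcg]
  exact h

lemma cell_subset_Cset {p : ℕ} {kb : ℕ → ℕ} (h : Marked (Mp p) (Kp p) kb) :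
    Cell (Mp p) kb ⊆ Cset := by
  have hpos : 0 < 2^(Mp p) := Nat.two_pow_pos _
  set kf : Fin (Mp p) → Fin (2^(Mp p)) := fun i => ⟨kb i.1 % 2^(Mp p), Nat.mod_lt _ hpos⟩ with hkf
  have hemb : ∀ i < Mp p, emb (Mp p) kf i = kb i % 2^(Mp p) := by
    intro i hi
    simp [emb, dif_pos hi, hkf]
  have hCell : Cell (Mp p) (emb (Mp p) kf) = Cell (Mp p) kb := by
    rw [Cell_mod (Mp p) kb]
    exact Cell_congr hemb
  have hmk : Marked (Mp p) (Kp p) (emb (Mp p) kf) := by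
    have h1 := marked_mod (Kp_dvd p) h
    unfold Marked at h1 ⊢
    have hs : sigmaW (Mp p) (emb (Mp p) kf) = sigmaW (Mp p) (fun i => kb i % 2^(Mp p)) := by
      unfold sigmaW
      refine Finset.sum_congr rfl fun i hi => ?_
      rw [hemb i (Finset.mem_range.mp hi)]
    rw [hs]
    exact h1
  intro x hx
  exact Set.mem_iUnion.mpr ⟨p, Set.mem_iUnion.mpr ⟨⟨kf, hmk⟩, hCell ▸ hx⟩⟩

/-! ### The sum identity for updates -/

lemma sigmaW_update (m r v : ℕ) (k : ℕ → ℕ) (hr : r < m) :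
    sigmaW m (Function.update k r v) + (r+1) * k r = sigmaW m k + (r+1) * v := by
  unfold sigmaW
  have hmem : r ∈ Finset.range m := Finset.mem_range.mpr hr
  have h1 : ∀ i ∈ Finset.range m,
      (i+1) * Function.update k r v i = Function.update (fun i => (i+1) * k i) r ((r+1) * v) i := by
    intro i _
    rcases eq_or_ne i r with h|h
    · subst h; rw [Function.update_self, Function.update_self]
    · rw [Function.update_of_ne h, Function.update_of_ne h]
  rw [Finset.sum_congr rfl h1, Finset.sum_update_of_mem hmem]
  rw [Finset.sum_eq_sum_sdiff_singleton_add hmem (fun i => (i+1) * k i)]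
  ring

/-! ### Counting marked cells -/

lemma card_marked_mul_le (m q : ℕ) (hm : 1 ≤ m) (hqm : q ≤ m) :
    Nat.card {kf : Fin m → Fin (2^m) // Marked m (2^q) (emb m kf)} * 2^q ≤ (2^m)^m := by
  classical
  set D := {kf : Fin m → Fin (2^m) // Marked m (2^q) (emb m kf)} with hD
  have hpow : (2:ℕ)^m = 2^(m-q) * 2^q := by
    rw [← pow_add, Nat.sub_add_cancel hqm]
  have hq0 : (0:ℕ) < 2^q := Nat.two_pow_pos q
  set i0 : Fin m := ⟨0, hm⟩ with hi0
  set φ : D → Fin (2^(m-q)) × (Fin (m-1) → Fin (2^m)) := fun kf =>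
    (⟨(kf.1 i0 : ℕ) / 2^q, by
      apply Nat.div_lt_of_lt_mul
      calc ((kf.1 i0 : ℕ)) < 2^m := (kf.1 i0).2
        _ = 2^q * 2^(m-q) := by rw [hpow]; ring⟩,
     fun j => kf.1 ⟨j.1 + 1, by omega⟩) with hphi
  have hinj : Function.Injective φ := by
    rintro ⟨a, ha⟩ ⟨b, hb⟩ hab
    have h1 : ((a i0 : ℕ)) / 2^q = ((b i0 : ℕ)) / 2^q := by
      have := congrArg (fun z => (z.1 : ℕ)) hab
      simpa [hphi] using this
    have h2 : ∀ j : Fin (m-1), a ⟨j.1 + 1, by omega⟩ = b ⟨j.1 + 1, by omega⟩ := by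
      intro j
      have := congrArg (fun z => z.2 j) hab
      simpa [hphi] using this
    have htail : ∀ i : Fin m, i ≠ i0 → a i = b i := by
      intro i hi
      have hipos : i.1 ≠ 0 := by
        intro hc; exact hi (Fin.ext hc)
      have hjlt : i.1 - 1 < m - 1 := by omega
      have h3 := h2 ⟨i.1 - 1, hjlt⟩
      have hieq : (⟨(i.1 - 1) + 1, by omega⟩ : Fin m) = i := Fin.ext (by simp; omega)
      rwa [hieq] at h3
    have hembtail : ∀ i ∈ Finset.range m \ {0}, emb m a i = emb m b i := by
      intro i hi
      rw [Finset.mem_sdiff, Finset.mem_range, Finset.mem_singleton] at hi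
      obtain ⟨him, hi0'⟩ := hi
      rw [emb, emb]
      simp only [dif_pos him]
      have h4 := htail ⟨i, him⟩ (by
        intro hc
        exact hi0' (by simpa [hi0] using congrArg Fin.val hc))
      rw [h4]
    have h0mem : (0:ℕ) ∈ Finset.range m := Finset.mem_range.mpr (by omega)
    have hsa : sigmaW m (emb m a)
        = ∑ i ∈ Finset.range m \ {0}, (i+1) * emb m a i + (0+1) * emb m a 0 := by
      unfold sigmaW
      exact Finset.sum_eq_sum_sdiff_singleton_add h0mem _
    have hsb : sigmaW m (emb m b)
        = ∑ i ∈ Finset.range m \ {0}, (i+1) * emb m b i + (0+1) * emb m b 0 := by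
      unfold sigmaW
      exact Finset.sum_eq_sum_sdiff_singleton_add h0mem _
    have hsum_eq : ∑ i ∈ Finset.range m \ {0}, (i+1) * emb m a i
        = ∑ i ∈ Finset.range m \ {0}, (i+1) * emb m b i :=
      Finset.sum_congr rfl fun i hi => by rw [hembtail i hi]
    have hmarka : ((sigmaW m (emb m a) : ZMod (2^q))) = 0 := ha
    have hmarkb : ((sigmaW m (emb m b) : ZMod (2^q))) = 0 := hb
    rw [hsa, Nat.cast_add] at hmarka
    rw [hsb, Nat.cast_add] at hmarkb
    have hcast : ((emb m a 0 : ℕ) : ZMod (2^q)) = ((emb m b 0 : ℕ) : ZMod (2^q)) := by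
      have h5 := hmarka.trans hmarkb.symm
      rw [hsum_eq] at h5
      have h6 := add_left_cancel h5
      have h7 : ((((0:ℕ)+1) * emb m a 0 : ℕ) : ZMod (2^q)) = ((emb m a 0 : ℕ) : ZMod (2^q)) := by
        norm_num
      have h8 : ((((0:ℕ)+1) * emb m b 0 : ℕ) : ZMod (2^q)) = ((emb m b 0 : ℕ) : ZMod (2^q)) := by
        norm_num
      rw [h7, h8] at h6
      exact h6
    have hmod : (emb m a 0) % 2^q = (emb m b 0) % 2^q :=
      (ZMod.natCast_eq_natCast_iff _ _ _).mp hcast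
    have hemb0a : emb m a 0 = (a i0 : ℕ) := by
      rw [emb]
      simp only [dif_pos (show (0:ℕ) < m by omega)]
      rfl
    have hemb0b : emb m b 0 = (b i0 : ℕ) := by
      rw [emb]
      simp only [dif_pos (show (0:ℕ) < m by omega)]
      rfl
    have hval : (a i0 : ℕ) = (b i0 : ℕ) := by
      have hda := Nat.div_add_mod ((a i0 : ℕ)) (2^q)
      have hdb := Nat.div_add_mod ((b i0 : ℕ)) (2^q)
      rw [hemb0a, hemb0b] at hmod
      have h9 : 2^q * ((a i0 : ℕ)/2^q) = 2^q * ((b i0 : ℕ)/2^q) := by rw [h1]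
      omega
    refine Subtype.ext (funext fun i => ?_)
    rcases eq_or_ne i i0 with h|h
    · subst h; exact Fin.ext hval
    · exact htail i h
  calc Nat.card D * 2^q
      ≤ Nat.card (Fin (2^(m-q)) × (Fin (m-1) → Fin (2^m))) * 2^q :=
        Nat.mul_le_mul_right _ (Nat.card_le_card_of_injective φ hinj)
    _ = (2^(m-q) * (2^m)^(m-1)) * 2^q := by
        rw [Nat.card_eq_fintype_card, Fintype.card_prod, Fintype.card_fun]
        simp
    _ = (2^(m-q) * 2^q) * (2^m)^(m-1) := by ring
    _ = 2^m * (2^m)^(m-1) := by rw [← hpow]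
    _ = (2^m)^(m-1+1) := by rw [pow_succ]; ring
    _ = (2^m)^m := by congr 1; omega

end RdF


namespace RdF
local notation "𝕋" => AddCircle (1 : ℝ)

/-! ### The covering lemma -/

lemma covering {x : Tomega} (hx : x ∉ Gset) (p : ℕ) :
    ∃ (r : ℕ) (kb : ℕ → ℕ), r < Mp p ∧ Marked (Mp p) (Kp p) kb ∧
      (x ∈ Cell (Mp p) kb ∨ x ∈ Cell (Mp p) (Function.update kb r (kb r + 1))) := by
  set m := Mp p with hm
  set KK := Kp p with hKK
  set k := kOf m x with hkdef
  have hklt : ∀ i, k i < 2^m := fun i => (kOf_spec hx m i).1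
  have hxk : x ∈ Cell m k := mem_cell_kOf hx m
  set s := sigmaW m k % KK with hs
  rcases eq_or_ne s 0 with hs0 | hs0
  · -- x's own cell is marked
    refine ⟨0, k, by have := Mp_ge_two p; omega, ?_, Or.inl hxk⟩
    unfold Marked
    refine (ZMod.natCast_eq_zero_iff _ _).mpr (Nat.dvd_of_mod_eq_zero ?_)
    rw [← hs]
    exact hs0
  · -- use the neighbour below in direction r = s - 1
    have hsltK : s < KK := Nat.mod_lt _ (by rw [hKK]; exact Nat.two_pow_pos _)
    have hKm : KK = m + 1 := Kp_eq p
    set r := s - 1 with hr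
    have hrm : r < m := by omega
    set c := 2^m - 1 with hc
    set kb := Function.update k r (k r + c) with hkb
    have hsum := sigmaW_update m r (k r + c) k hrm
    -- sigmaW m kb + (r+1) * k r = sigmaW m k + (r+1) * (k r + c)
    have hr1 : r + 1 = s := by omega
    have h2m : ((2^m : ℕ) : ZMod KK) = 0 :=
      (ZMod.natCast_eq_zero_iff _ _).mpr (Kp_dvd p)
    have hcneg : ((c : ℕ) : ZMod KK) = -1 := by
      have h1 : c + 1 = 2^m := by
        have h2 : (0:ℕ) < 2^m := Nat.two_pow_pos m
        omega
      have h3 : ((c + 1 : ℕ) : ZMod KK) = ((2^m : ℕ) : ZMod KK) := by rw [h1]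
      rw [Nat.cast_add, Nat.cast_one, h2m] at h3
      linear_combination h3
    have hσk : ((sigmaW m k : ℕ) : ZMod KK) = ((s : ℕ) : ZMod KK) := by
      rw [hs, ZMod.natCast_mod]
    have hmb : Marked m KK kb := by
      unfold Marked
      have hcast := congrArg (fun n : ℕ => (n : ZMod KK)) hsum
      push_cast at hcast
      -- hcast : ↑(sigmaW m kb) + (r+1) * k r = ↑(sigmaW m k) + (r+1) * (k r + c)  (in ZMod KK)
      have hr1' : ((r : ZMod KK) + 1) = (s : ZMod KK) := by
        have := congrArg (fun n : ℕ => (n : ZMod KK)) hr1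
        push_cast at this
        exact this
      have hcc : ((c : ZMod KK)) = -1 := by exact_mod_cast hcneg
      have hσk' : ((sigmaW m k : ZMod KK)) = (s : ZMod KK) := by exact_mod_cast hσk
      linear_combination hcast + hσk' + ((c : ℕ) : ZMod KK) * hr1' + ((s : ℕ) : ZMod KK) * hcc
    refine ⟨r, kb, hrm, hmb, Or.inr ?_⟩
    have hupd : Function.update kb r (kb r + 1) = Function.update k r (k r + 2^m) := by
      have hval : k r + c + 1 = k r + 2^m := by
        have h2 : (0:ℕ) < 2^m := Nat.two_pow_pos m
        omega
      rw [hkb, Function.update_idem, Function.update_self, hval]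
    rw [hupd]
    have hcell : Cell m (Function.update k r (k r + 2^m)) = Cell m k := by
      rw [Cell_mod]
      refine Cell_congr fun i hi => ?_
      rcases eq_or_ne i r with h|h
      · subst h
        rw [Function.update_self, Nat.add_mod_right, Nat.mod_eq_of_lt (hklt _)]
      · rw [Function.update_of_ne h, Nat.mod_eq_of_lt (hklt _)]
    rw [hcell]
    exact hxk

end RdF


namespace RdF
local notation "𝕋" => AddCircle (1 : ℝ)

/-! ### Measure of the marked set -/

lemma meas_Cp_le (μ : Measure Tomega) [μ.IsAddHaarMeasure] [IsProbabilityMeasure μ] (p : ℕ) :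
    μ (Cp p) ≤ (((Kp p : ℕ)) : ENNReal)⁻¹ := by
  classical
  obtain ⟨hβ0, hNβ⟩ := cube_measure_facts μ (Mp p)
  set m := Mp p with hm
  set β := μ (cubeSet m m) with hβ
  set D := {kf : Fin m → Fin (2^m) // Marked m (Kp p) (emb m kf)} with hD
  letI : Fintype D := Fintype.ofFinite D
  have hle : μ (Cp p) ≤ ∑' (kf : D), μ (Cell m (emb m kf.1)) := measure_iUnion_le _
  have hconst : ∀ kf : D, μ (Cell m (emb m kf.1)) = β := fun kf => meas_cell μ _ _
  have htsum : ∑' (kf : D), μ (Cell m (emb m kf.1)) = (Nat.card D : ENNReal) * β := by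
    simp_rw [hconst]
    rw [tsum_fintype, Finset.sum_const, nsmul_eq_mul, Finset.card_univ, Nat.card_eq_fintype_card]
  have hcount : Nat.card D * Kp p ≤ (2^m)^m := by
    have := card_marked_mul_le m (p+2) (by have := Mp_ge_two p; omega) (Mp_ge p)
    exact this
  rw [ENNReal.le_inv_iff_mul_le]
  calc μ (Cp p) * ((Kp p : ℕ) : ENNReal)
      ≤ ((Nat.card D : ENNReal) * β) * ((Kp p : ℕ) : ENNReal) := by
        exact mul_le_mul_left (hle.trans_eq htsum) _
    _ = ((Nat.card D * Kp p : ℕ) : ENNReal) * β := by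
        push_cast; ring
    _ ≤ (((2^m)^m : ℕ) : ENNReal) * β := by
        exact mul_le_mul_left (by exact_mod_cast hcount) β
    _ ≤ 1 := hNβ

lemma ell_eq_half_pow (m : ℕ) : ell m = ((1:ℝ)/2)^m := by
  unfold ell
  rw [div_pow, one_pow, one_div]

lemma meas_Cset_le (μ : Measure Tomega) [μ.IsAddHaarMeasure] [IsProbabilityMeasure μ] :
    μ Cset ≤ 2⁻¹ := by
  have hKcast : ∀ p : ℕ, (((Kp p : ℕ)) : ENNReal)⁻¹ = ((2:ENNReal)⁻¹)^(p+2) := by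
    intro p
    have : ((Kp p : ℕ) : ENNReal) = (2:ENNReal)^(p+2) := by
      unfold Kp; push_cast; ring
    rw [this, ← ENNReal.inv_pow]
  calc μ Cset ≤ ∑' p, μ (Cp p) := measure_iUnion_le _
    _ ≤ ∑' p, ((2:ENNReal)⁻¹)^(p+2) :=
        ENNReal.tsum_le_tsum (fun p => (meas_Cp_le μ p).trans_eq (hKcast p))
    _ = (∑' p : ℕ, ((2:ENNReal)⁻¹)^p) * ((2:ENNReal)⁻¹)^2 := by
        simp_rw [pow_add]; exact ENNReal.tsum_mul_right
    _ = 2 * ((2:ENNReal)⁻¹)^2 := by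
        rw [ENNReal.tsum_geometric, ENNReal.one_sub_inv_two, inv_inv]
    _ = 2⁻¹ := by
        rw [sq, ← mul_assoc, ENNReal.mul_inv_cancel two_ne_zero ENNReal.ofNat_ne_top, one_mul]

lemma meas_Cset_pos (μ : Measure Tomega) [μ.IsAddHaarMeasure] [IsProbabilityMeasure μ] :
    0 < μ Cset := by
  obtain ⟨hβ0, _⟩ := cube_measure_facts μ (Mp 0)
  have hmark : Marked (Mp 0) (Kp 0) (fun _ => 0) := by
    unfold Marked sigmaW
    simp
  have hsub : Cell (Mp 0) (fun _ => 0) ⊆ Cset := cell_subset_Cset hmark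
  have hcm : μ (Cell (Mp 0) (fun _ => 0)) = μ (cubeSet (Mp 0) (Mp 0)) := meas_cell μ _ _
  have hpos : 0 < μ (Cell (Mp 0) (fun _ => 0)) := by
    rw [hcm]; exact pos_iff_ne_zero.mpr hβ0
  exact lt_of_lt_of_le hpos (measure_mono hsub)

/-! ### Diameter bound -/

lemma W_coord {m r : ℕ} {w : Tomega} (hw : w ∈ Wcube m r) {i : ℕ} (hi : i < m) :
    w i ∈ arc 0 (2 * ell m) := by
  have hsub : Set.Ioo (0:ℝ) (ell m) ⊆ Set.Ioo 0 (2 * ell m) := by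
    intro t ht; exact ⟨ht.1, by nlinarith [ell_pos m, ht.2]⟩
  rcases hw with hw | hw
  · exact arc_mono hsub (hw i hi)
  · obtain ⟨w', hw', rfl⟩ := Set.mem_vadd_set.mp hw
    have hz : w' i ∈ arc 0 (ell m) := hw' i hi
    rcases eq_or_ne i r with h|h
    · subst h
      obtain ⟨t, ht, hteq⟩ := hz
      have hcoord : (tauPt m i +ᵥ w') i = ((ell m + t : ℝ) : 𝕋) := by
        show tauPt m i i + w' i = _
        rw [← hteq]
        simp only [tauPt, eq_self_iff_true, if_true]
        rw [← AddCircle.coe_add]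
        rfl
      rw [hcoord]
      exact ⟨ell m + t, ⟨by nlinarith [ell_pos m, ht.1], by nlinarith [ht.2]⟩, rfl⟩
    · have hcoord : (tauPt m r +ᵥ w') i = w' i := by
        show tauPt m r i + w' i = w' i
        simp only [tauPt, if_neg h, zero_add]
      rw [hcoord]
      exact arc_mono hsub hz

lemma diam_W {m r : ℕ} (y : Tomega) {u v : Tomega}
    (hu : u ∈ y +ᵥ Wcube m r) (hv : v ∈ y +ᵥ Wcube m r) : Dmet u v ≤ 4 * ell m := by
  obtain ⟨w, hw, rfl⟩ := Set.mem_vadd_set.mp hu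
  obtain ⟨w', hw', rfl⟩ := Set.mem_vadd_set.mp hv
  have hcoord : ∀ n : ℕ, (y +ᵥ w) n - (y +ᵥ w') n = w n - w' n := by
    intro n
    show (y n + w n) - (y n + w' n) = _
    abel
  set f : ℕ → ℝ := fun n => ‖(y +ᵥ w) n - (y +ᵥ w') n‖ / 2^(n+1) with hf
  have hf0 : ∀ n, 0 ≤ f n := fun n => div_nonneg (norm_nonneg _) (by positivity)
  have hfhalf : ∀ n, f n ≤ (1/2) / 2^(n+1) := by
    intro n
    simp only [hf]
    gcongr
    rw [hcoord n]
    exact norm_le_half _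
  have hfm : ∀ n < m, f n ≤ (2 * ell m) / 2^(n+1) := by
    intro n hn
    simp only [hf]
    gcongr
    rw [hcoord n]
    exact (by simpa using norm_sub_le_arc (W_coord hw hn) (W_coord hw' hn))
  have hgeom : (fun n : ℕ => ((1:ℝ)/2)/2^(n+1)) = (fun n : ℕ => ((1/2:ℝ)/2)/2^n) := by
    funext n
    rw [pow_succ]
    ring
  have hsum2 : Summable (fun n : ℕ => ((1:ℝ)/2)/2^(n+1)) := by
    rw [hgeom]
    exact summable_geometric_two' _
  have hsf : Summable f := Summable.of_nonneg_of_le hf0 hfhalf hsum2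
  have hDmet : Dmet (y +ᵥ w) (y +ᵥ w') = ∑' n, f n := rfl
  have hsplit := Summable.sum_add_tsum_nat_add (f := f) m hsf
  have hS1 : ∑ i ∈ Finset.range m, f i ≤ 2 * ell m := by
    have h1 : ∀ i ∈ Finset.range m, f i ≤ (2 * ell m) * ((1:ℝ)/2)^(i+1) := by
      intro i hi
      calc f i ≤ (2*ell m)/2^(i+1) := hfm i (Finset.mem_range.mp hi)
        _ = (2*ell m) * ((1:ℝ)/2)^(i+1) := by
            rw [one_div_pow, mul_one_div]
    calc ∑ i ∈ Finset.range m, f i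
        ≤ ∑ i ∈ Finset.range m, (2 * ell m) * ((1:ℝ)/2)^(i+1) := Finset.sum_le_sum h1
      _ = (2 * ell m) * ∑ i ∈ Finset.range m, ((1:ℝ)/2)^(i+1) := by rw [Finset.mul_sum]
      _ ≤ (2 * ell m) * 1 := by
          refine mul_le_mul_of_nonneg_left ?_ (by nlinarith [ell_pos m])
          have heq2 : ∑ i ∈ Finset.range m, ((1:ℝ)/2)^(i+1)
              = (∑ i ∈ Finset.range m, ((1:ℝ)/2)^i) * (1/2) := by
            rw [Finset.sum_mul]
            exact Finset.sum_congr rfl fun i _ => pow_succ _ _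
          rw [heq2]
          have := sum_geometric_two_le m
          nlinarith [this]
      _ = 2 * ell m := mul_one _
  have hS2 : ∑' i : ℕ, f (i + m) ≤ 2 * ell m := by
    have hb : Summable (fun i : ℕ => (((1:ℝ)/2)/2^m)/2/2^i) := summable_geometric_two' _
    have heq : ∀ i : ℕ, ((1:ℝ)/2)/2^((i+m)+1) = (((1:ℝ)/2)/2^m)/2/2^i := by
      intro i
      rw [show (i+m)+1 = i + (m+1) from by omega, pow_add, pow_succ]
      field_simp
    have hle2 : ∀ i : ℕ, f (i+m) ≤ (((1:ℝ)/2)/2^m)/2/2^i := by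
      intro i
      have := hfhalf (i+m)
      rwa [heq i] at this
    have hsum3 : Summable (fun i : ℕ => f (i + m)) :=
      (summable_nat_add_iff m).mpr hsf
    calc ∑' i : ℕ, f (i + m) ≤ ∑' i : ℕ, (((1:ℝ)/2)/2^m)/2/2^i := Summable.tsum_le_tsum hle2 hsum3 hb
      _ = ((1:ℝ)/2)/2^m := tsum_geometric_two' _
      _ ≤ 2 * ell m := by
          have h1 : ((1:ℝ)/2)/2^m = (1/2) * ell m := by
            unfold ell
            rw [div_eq_mul_inv]
          rw [h1]
          nlinarith [ell_pos m]
  rw [hDmet, ← hsplit]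
  linarith

/-! ### Per-point existence of a good interval -/

lemma exists_I (μ : Measure Tomega) [μ.IsAddHaarMeasure] [IsProbabilityMeasure μ]
    {x : Tomega} (hx : x ∉ Gset) (p : ℕ) :
    ∃ I : Set Tomega, I ∈ RStar ∧ x ∈ I ∧
      (∀ u ∈ I, ∀ v ∈ I, Dmet u v ≤ 4 * ell (Mp p)) ∧
      (1 : ENNReal)/2 ≤ μ (Cset ∩ I) / μ I := by
  obtain ⟨r, kb, hrm, hmark, hmem⟩ := covering hx p
  set m := Mp p with hm
  obtain ⟨hβ0, hNβ⟩ := cube_measure_facts μ m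
  set β := μ (cubeSet m m) with hβ
  set I : Set Tomega := base m kb +ᵥ Wcube m r with hI
  have hIW : I = Cell m kb ∪ Cell m (Function.update kb r (kb r + 1)) := vadd_W_eq hrm kb
  refine ⟨I, ?_, ?_, ?_, ?_⟩
  · exact Set.mem_union_right _ ⟨base m kb, m, r, Mp_ge_two p, hrm, hI⟩
  · rw [hIW]
    rcases hmem with h|h
    · exact Or.inl h
    · exact Or.inr h
  · intro u hu v hv
    exact diam_W (base m kb) (hI ▸ hu) (hI ▸ hv)
  · have hdisj := cell_disjoint_succ (by have := Mp_ge_two p; omega) hrm kb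
    have hμI : μ I = 2 * β := by
      rw [hIW, measure_union hdisj (measurableSet_cell _ _), meas_cell, meas_cell, hβ, two_mul]
    have hQI : Cell m kb ⊆ I := by
      rw [hIW]; exact Set.subset_union_left
    have hQC : Cell m kb ⊆ Cset := cell_subset_Cset hmark
    have hQ : β ≤ μ (Cset ∩ I) := by
      rw [hβ, ← meas_cell μ m kb]
      exact measure_mono (Set.subset_inter hQC hQI)
    have hβtop : β ≠ ⊤ := measure_ne_top μ _
    have h12 := ENNReal.mul_div_mul_right (c := β) 1 2 hβ0 hβtop
    calc (1 : ENNReal)/2 = 1 * β / (2 * β) := h12.symm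
      _ = β / (2 * β) := by rw [one_mul]
      _ ≤ μ (Cset ∩ I) / (2 * β) := ENNReal.div_le_div_right hQ _
      _ = μ (Cset ∩ I) / μ I := by rw [hμI]

end RdF


namespace RdF

lemma ennreal_half_le : (2 : ENNReal)⁻¹ ≤ 3/4 := by
  rw [ENNReal.le_div_iff_mul_le (Or.inl (by norm_num)) (Or.inl (by norm_num))]
  calc (2:ENNReal)⁻¹ * 4 = 2⁻¹ * (2 * 2) := by norm_num
    _ = (2⁻¹ * 2) * 2 := by ring
    _ = 2 := by rw [ENNReal.inv_mul_cancel two_ne_zero ENNReal.ofNat_ne_top, one_mul]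
    _ ≤ 3 := by norm_num

lemma ennreal_quarter_le_half : (1 : ENNReal)/4 ≤ 2⁻¹ := by
  have h1 : (1 : ENNReal)/4 = 4⁻¹ := one_div 4
  rw [h1]
  exact ENNReal.inv_le_inv.mpr (by norm_num)

lemma tendsto_eps : Filter.Tendsto (fun p : ℕ => 4 * ell (Mp p)) Filter.atTop (nhds 0) := by
  have hg : Filter.Tendsto (fun p : ℕ => 4 * ((1:ℝ)/2)^p) Filter.atTop (nhds 0) := by
    have := (tendsto_pow_atTop_nhds_zero_of_lt_one
      (by norm_num : (0:ℝ) ≤ 1/2) (by norm_num : (1:ℝ)/2 < 1)).const_mul (4:ℝ)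
    simpa using this
  refine squeeze_zero (fun p => by nlinarith [ell_pos (Mp p)]) (fun p => ?_) hg
  have h1 : ell (Mp p) ≤ ((1:ℝ)/2)^p := by
    rw [ell_eq_half_pow]
    refine pow_le_pow_of_le_one (by norm_num) (by norm_num) ?_
    have := Mp_ge p; omega
  nlinarith [h1]

end RdF

theorem RStar_does_not_differentiate_Linfty (μ : Measure Tomega) [μ.IsAddHaarMeasure]
    [IsProbabilityMeasure μ] :
    ∃ C : Set Tomega, MeasurableSet C ∧ 0 < μ C ∧ μ C ≤ 3 / 4 ∧
      (1 : ENNReal) / 4 ≤ μ Cᶜ ∧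
      ∀ᵐ x ∂μ, ∃ (I : ℕ → Set Tomega) (ε : ℕ → ℝ),
        Filter.Tendsto ε Filter.atTop (𝓝 0) ∧
        ∀ p : ℕ, I p ∈ RStar ∧ x ∈ I p ∧
          (∀ u ∈ I p, ∀ v ∈ I p, Dmet u v ≤ ε p) ∧
          (1 : ENNReal) / 2 ≤ μ (C ∩ I p) / μ (I p) := by
  classical
  refine ⟨RdF.Cset, RdF.measurableSet_Cset, RdF.meas_Cset_pos μ,
    (RdF.meas_Cset_le μ).trans RdF.ennreal_half_le, ?_, ?_⟩
  · have hc : μ RdF.Csetᶜ = 1 - μ RdF.Cset :=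
      prob_compl_eq_one_sub RdF.measurableSet_Cset
    rw [hc]
    calc (1 : ENNReal)/4 ≤ 2⁻¹ := RdF.ennreal_quarter_le_half
      _ = 1 - 2⁻¹ := ENNReal.one_sub_inv_two.symm
      _ ≤ 1 - μ RdF.Cset := tsub_le_tsub_left (RdF.meas_Cset_le μ) 1
  · have hae : ∀ᵐ x ∂μ, x ∉ RdF.Gset := by
      rw [MeasureTheory.ae_iff]
      have hset : {x : Tomega | ¬ x ∉ RdF.Gset} = RdF.Gset := by
        ext x; simp
      rw [hset]
      exact RdF.Gset_null μ
    filter_upwards [hae] with x hx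
    choose Ifun hIR hIx hId hIr using fun p => RdF.exists_I μ hx p
    exact ⟨Ifun, fun p => 4 * RdF.ell (RdF.Mp p), RdF.tendsto_eps,
      fun p => ⟨hIR p, hIx p, hId p, hIr p⟩⟩
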